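/- Let h(χ) = -log σ_k(χ^{-1}) on Γ_n with χ^{-1} the entrywise inverse. Then the matrix with entries h_{ij} + (h_i/χ_j)δ_{ij} is negative semidefinite. -/

import Mathlib

open Finset

/-- The `k`-th elementary symmetric polynomial in `n` real variables. -/
noncomputable def esymm (n k : ℕ) (x : Fin n → ℝ) : ℝ :=
  ∑ s ∈ Finset.univ.powersetCard k, ∏ i ∈ s, x i

/-- The `k`-th elementary symmetric polynomial of the variables with the
`i`-th one removed. -/
noncomputable def esymmOmit (n k : ℕ) (x : Fin n → ℝ) (i : Fin n) : ℝ :=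
  ∑ s ∈ (Finset.univ.erase i).powersetCard k, ∏ j ∈ s, x j

/-- The `i`-th partial derivative of a function of `n` real variables. -/
noncomputable def pd (n : ℕ) (g : (Fin n → ℝ) → ℝ) (i : Fin n) (χ : Fin n → ℝ) : ℝ :=
  fderiv ℝ g χ (Pi.single i 1)

/-- The positive orthant `Γ_n`. -/
def Gamma (n : ℕ) : Set (Fin n → ℝ) := {χ | ∀ i, 0 < χ i}

namespace Stmt8Aux

/-- `∏_{i∈s} χ_i⁻¹`. -/
noncomputable def Pf (n : ℕ) (s : Finset (Fin n)) (χ : Fin n → ℝ) : ℝ := ∏ i ∈ s, (χ i)⁻¹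

/-- `σ_k(χ⁻¹)`. -/
noncomputable def Ef (n k : ℕ) (χ : Fin n → ℝ) : ℝ :=
  ∑ s ∈ Finset.univ.powersetCard k, Pf n s χ

noncomputable def Af (n k : ℕ) (i : Fin n) (χ : Fin n → ℝ) : ℝ :=
  ∑ s ∈ Finset.univ.powersetCard k, if i ∈ s then Pf n s χ else 0

noncomputable def Bf (n k : ℕ) (i j : Fin n) (χ : Fin n → ℝ) : ℝ :=
  ∑ s ∈ Finset.univ.powersetCard k, if i ∈ s ∧ j ∈ s then Pf n s χ else 0

noncomputable def Pder (n : ℕ) (s : Finset (Fin n)) (χ : Fin n → ℝ) : (Fin n → ℝ) →L[ℝ] ℝ :=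
  ∑ i ∈ s, (-(Pf n s χ * (χ i)⁻¹)) • ContinuousLinearMap.proj i

noncomputable def Eder (n k : ℕ) (χ : Fin n → ℝ) : (Fin n → ℝ) →L[ℝ] ℝ :=
  ∑ s ∈ Finset.univ.powersetCard k, Pder n s χ

noncomputable def Ader (n k : ℕ) (i : Fin n) (χ : Fin n → ℝ) : (Fin n → ℝ) →L[ℝ] ℝ :=
  ∑ s ∈ Finset.univ.powersetCard k, if i ∈ s then Pder n s χ else 0

lemma hasF_inv (n : ℕ) (i : Fin n) (χ : Fin n → ℝ) (hχi : χ i ≠ 0) :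
    HasFDerivAt (fun χ : Fin n → ℝ => (χ i)⁻¹)
      ((-((χ i) ^ 2)⁻¹) • ContinuousLinearMap.proj (R := ℝ) (φ := fun _ : Fin n => ℝ) i) χ :=
  (hasDerivAt_inv hχi).comp_hasFDerivAt χ
    (ContinuousLinearMap.proj (R := ℝ) (φ := fun _ : Fin n => ℝ) i).hasFDerivAt

lemma hasF_P (n : ℕ) (s : Finset (Fin n)) (χ : Fin n → ℝ) (hχ : ∀ i, 0 < χ i) :
    HasFDerivAt (Pf n s) (Pder n s χ) χ := by
  have h := HasFDerivAt.finset_prod (u := s) (x := χ)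
    (g := fun i (χ : Fin n → ℝ) => (χ i)⁻¹)
    (g' := fun i => (-((χ i) ^ 2)⁻¹) • ContinuousLinearMap.proj i)
    (fun i _ => hasF_inv n i χ (hχ i).ne')
  have heq : (∑ i ∈ s, (∏ j ∈ s.erase i, (χ j)⁻¹) •
      ((-((χ i) ^ 2)⁻¹) • ContinuousLinearMap.proj (R := ℝ) (φ := fun _ : Fin n => ℝ) i))
      = Pder n s χ := by
    rw [Pder]
    refine Finset.sum_congr rfl fun i hi => ?_
    rw [smul_smul]
    congr 1
    have hP : (χ i)⁻¹ * ∏ j ∈ s.erase i, (χ j)⁻¹ = Pf n s χ :=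
      Finset.mul_prod_erase s (fun j => (χ j)⁻¹) hi
    rw [← hP, sq, mul_inv]
    ring
  rw [← heq]
  exact h

lemma hasF_E (n k : ℕ) (χ : Fin n → ℝ) (hχ : ∀ i, 0 < χ i) :
    HasFDerivAt (Ef n k) (Eder n k χ) χ :=
  HasFDerivAt.fun_sum fun s _ => hasF_P n s χ hχ

lemma hasF_A (n k : ℕ) (i : Fin n) (χ : Fin n → ℝ) (hχ : ∀ i, 0 < χ i) :
    HasFDerivAt (Af n k i) (Ader n k i χ) χ := by
  apply HasFDerivAt.fun_sum
  intro s _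
  by_cases hi : i ∈ s
  · simpa [hi] using hasF_P n s χ hχ
  · simpa [hi] using hasFDerivAt_const (0 : ℝ) χ

lemma Pder_apply (n : ℕ) (s : Finset (Fin n)) (χ : Fin n → ℝ) (j : Fin n) :
    Pder n s χ (Pi.single j 1) = if j ∈ s then -(Pf n s χ * (χ j)⁻¹) else 0 := by
  simp [Pder, ContinuousLinearMap.sum_apply, Pi.single_apply, mul_ite]

lemma Eder_apply (n k : ℕ) (χ : Fin n → ℝ) (j : Fin n) :
    Eder n k χ (Pi.single j 1) = -((χ j)⁻¹ * Af n k j χ) := by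
  simp only [Eder, ContinuousLinearMap.sum_apply, Pder_apply, Af, Finset.mul_sum, neg_mul,
    ← Finset.sum_neg_distrib]
  refine Finset.sum_congr rfl fun s _ => ?_
  split_ifs <;> ring

lemma Ader_apply (n k : ℕ) (i : Fin n) (χ : Fin n → ℝ) (j : Fin n) :
    Ader n k i χ (Pi.single j 1) = -((χ j)⁻¹ * Bf n k i j χ) := by
  simp only [Ader, ContinuousLinearMap.sum_apply, Bf, Finset.mul_sum, ← Finset.sum_neg_distrib]
  refine Finset.sum_congr rfl fun s _ => ?_
  by_cases hi : i ∈ s <;> by_cases hj : j ∈ s <;>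
    simp [hi, hj, Pder_apply] <;> ring

lemma Ef_pos (n k : ℕ) (hkn : k ≤ n) (χ : Fin n → ℝ) (hχ : ∀ i, 0 < χ i) :
    0 < Ef n k χ := by
  refine Finset.sum_pos (fun s _ => Finset.prod_pos fun i _ => inv_pos.2 (hχ i)) ?_
  refine Finset.powersetCard_nonempty.2 ?_
  simpa using hkn

lemma hasF_h (n k : ℕ) (hkn : k ≤ n) (χ : Fin n → ℝ) (hχ : ∀ i, 0 < χ i) :
    HasFDerivAt (fun χ : Fin n → ℝ => -Real.log (esymm n k (fun i => (χ i)⁻¹)))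
      (-((Ef n k χ)⁻¹ • Eder n k χ)) χ := by
  have hE := hasF_E n k χ hχ
  have hlog := (Real.hasDerivAt_log (Ef_pos n k hkn χ hχ).ne').comp_hasFDerivAt χ hE
  exact hlog.neg

lemma pd_h (n k : ℕ) (hkn : k ≤ n) (i : Fin n) (χ : Fin n → ℝ) (hχ : χ ∈ Gamma n) :
    pd n (fun χ : Fin n → ℝ => -Real.log (esymm n k (fun i => (χ i)⁻¹))) i χ
      = (Ef n k χ)⁻¹ * ((χ i)⁻¹ * Af n k i χ) := by
  rw [pd, (hasF_h n k hkn χ hχ).fderiv]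
  simp [Eder_apply]

/-- The explicit formula for the gradient entries of `h`. -/
noncomputable def Gf (n k : ℕ) (i : Fin n) (χ : Fin n → ℝ) : ℝ :=
  (Ef n k χ)⁻¹ * ((χ i)⁻¹ * Af n k i χ)

lemma isOpen_Gamma (n : ℕ) : IsOpen (Gamma n) := by
  have : Gamma n = ⋂ i, {χ : Fin n → ℝ | 0 < χ i} := by
    ext χ; simp [Gamma, Set.mem_iInter]
  rw [this]
  exact isOpen_iInter_of_finite fun i => isOpen_lt continuous_const (continuous_apply i)

lemma hasF_G (n k : ℕ) (hkn : k ≤ n) (i : Fin n) (χ : Fin n → ℝ) (hχ : ∀ i, 0 < χ i) :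
    HasFDerivAt (Gf n k i)
      ((Ef n k χ)⁻¹ • ((χ i)⁻¹ • Ader n k i χ +
          Af n k i χ • ((-((χ i) ^ 2)⁻¹) •
            ContinuousLinearMap.proj (R := ℝ) (φ := fun _ : Fin n => ℝ) i)) +
        ((χ i)⁻¹ * Af n k i χ) • ((-((Ef n k χ) ^ 2)⁻¹) • Eder n k χ)) χ := by
  have h1 : HasFDerivAt (fun χ => (Ef n k χ)⁻¹)
      ((-((Ef n k χ) ^ 2)⁻¹) • Eder n k χ) χ :=
    (hasDerivAt_inv (Ef_pos n k hkn χ hχ).ne').comp_hasFDerivAt χ (hasF_E n k χ hχ)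
  have h2 := hasF_inv n i χ (hχ i).ne'
  have h3 := hasF_A n k i χ hχ
  exact h1.mul (h2.mul h3)

lemma pd_pd (n k : ℕ) (hkn : k ≤ n) (i j : Fin n) (χ : Fin n → ℝ) (hχ : χ ∈ Gamma n) :
    pd n (pd n (fun χ : Fin n → ℝ => -Real.log (esymm n k (fun i => (χ i)⁻¹))) i) j χ
      = ((Ef n k χ) ^ 2)⁻¹ * ((χ j)⁻¹ * Af n k j χ) * ((χ i)⁻¹ * Af n k i χ)
        - (Ef n k χ)⁻¹ * ((χ i)⁻¹ * ((χ j)⁻¹ * Bf n k i j χ))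
        - (if i = j then (Ef n k χ)⁻¹ * (((χ i) ^ 2)⁻¹ * Af n k i χ) else 0) := by
  have hev : pd n (fun χ : Fin n → ℝ => -Real.log (esymm n k (fun i => (χ i)⁻¹))) i
      =ᶠ[nhds χ] Gf n k i :=
    Filter.eventuallyEq_of_mem ((isOpen_Gamma n).mem_nhds hχ)
      (fun x hx => pd_h n k hkn i x hx)
  rw [pd, hev.fderiv_eq, (hasF_G n k hkn i χ hχ).fderiv]
  simp only [ContinuousLinearMap.add_apply, ContinuousLinearMap.smul_apply,
    Eder_apply, Ader_apply, ContinuousLinearMap.proj_apply, smul_eq_mul]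
  have : (Pi.single j 1 : Fin n → ℝ) i = if i = j then 1 else 0 := by
    simp [Pi.single_apply]
  rw [this]
  split_ifs with hij
  · subst hij; ring
  · ring

lemma ite_sum (n : ℕ) (s : Finset (Fin n)) (f : Fin n → ℝ) :
    ∑ i : Fin n, (if i ∈ s then f i else 0) = ∑ i ∈ s, f i := by
  rw [Finset.sum_ite_mem, Finset.univ_inter]

lemma sum_A (n k : ℕ) (χ : Fin n → ℝ) (u : Fin n → ℝ) :
    ∑ i : Fin n, u i * Af n k i χ
      = ∑ s ∈ Finset.univ.powersetCard k, Pf n s χ * ∑ i ∈ s, u i := by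
  simp only [Af, Finset.mul_sum]
  rw [Finset.sum_comm]
  refine Finset.sum_congr rfl fun s _ => ?_
  have hite : ∀ i : Fin n, u i * (if i ∈ s then Pf n s χ else 0)
      = if i ∈ s then Pf n s χ * u i else 0 := by
    intro i; split_ifs <;> ring
  simp only [hite]
  rw [ite_sum]

lemma sum_B (n k : ℕ) (χ : Fin n → ℝ) (u : Fin n → ℝ) :
    ∑ i : Fin n, ∑ j : Fin n, u i * u j * Bf n k i j χ
      = ∑ s ∈ Finset.univ.powersetCard k, Pf n s χ * (∑ i ∈ s, u i) ^ 2 := by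
  have step : ∀ i : Fin n, ∑ j : Fin n, u i * u j * Bf n k i j χ
      = ∑ s ∈ Finset.univ.powersetCard k,
          (if i ∈ s then Pf n s χ * u i * ∑ j ∈ s, u j else 0) := by
    intro i
    have : ∀ j : Fin n, u i * u j * Bf n k i j χ
        = ∑ s ∈ Finset.univ.powersetCard k,
            (if i ∈ s then (if j ∈ s then Pf n s χ * u i * u j else 0) else 0) := by
      intro j
      rw [Bf, Finset.mul_sum]
      refine Finset.sum_congr rfl fun s _ => ?_
      by_cases hi : i ∈ s <;> by_cases hj : j ∈ s <;> simp [hi, hj] <;> ring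
    simp only [this]
    rw [Finset.sum_comm]
    refine Finset.sum_congr rfl fun s _ => ?_
    by_cases hi : i ∈ s
    · simp only [hi, if_true]
      rw [ite_sum, Finset.mul_sum]
    · simp [hi]
  simp only [step]
  rw [Finset.sum_comm]
  refine Finset.sum_congr rfl fun s _ => ?_
  rw [ite_sum, ← Finset.sum_mul, ← Finset.mul_sum]
  ring

lemma Pf_nonneg (n : ℕ) (s : Finset (Fin n)) (χ : Fin n → ℝ) (hχ : ∀ i, 0 < χ i) :
    0 ≤ Pf n s χ :=
  Finset.prod_nonneg fun i _ => (inv_pos.2 (hχ i)).le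

theorem key (n k : ℕ) (hkn : k ≤ n) (χ : Fin n → ℝ) (hχ : ∀ i, 0 < χ i) (u : Fin n → ℝ) :
    (∑ i : Fin n, u i * Af n k i χ) ^ 2
      ≤ Ef n k χ * ∑ i : Fin n, ∑ j : Fin n, u i * u j * Bf n k i j χ := by
  rw [sum_A, sum_B, Ef]
  have cs := Finset.sum_mul_sq_le_sq_mul_sq (Finset.univ.powersetCard k)
    (fun s => Real.sqrt (Pf n s χ)) (fun s => Real.sqrt (Pf n s χ) * ∑ i ∈ s, u i)
  have e1 : ∀ s ∈ Finset.univ.powersetCard k,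
      Real.sqrt (Pf n s χ) * (Real.sqrt (Pf n s χ) * ∑ i ∈ s, u i)
        = Pf n s χ * ∑ i ∈ s, u i := by
    intro s _
    rw [← mul_assoc, Real.mul_self_sqrt (Pf_nonneg n s χ hχ)]
  have e2 : ∀ s ∈ Finset.univ.powersetCard k,
      Real.sqrt (Pf n s χ) ^ 2 = Pf n s χ := by
    intro s _; exact Real.sq_sqrt (Pf_nonneg n s χ hχ)
  have e3 : ∀ s ∈ Finset.univ.powersetCard k,
      (Real.sqrt (Pf n s χ) * ∑ i ∈ s, u i) ^ 2 = Pf n s χ * (∑ i ∈ s, u i) ^ 2 := by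
    intro s _
    rw [mul_pow, Real.sq_sqrt (Pf_nonneg n s χ hχ)]
  rw [Finset.sum_congr rfl e1, Finset.sum_congr rfl e2, Finset.sum_congr rfl e3] at cs
  exact cs

end Stmt8Aux

/-- For `h(χ) = -log σ_k(χ⁻¹)` on `Γ_n`, the matrix with entries
`h_{ij} + (h_i/χ_j)δ_{ij}` is negative semidefinite. -/
theorem stmt8 (n k : ℕ) (hn : 1 ≤ n) (hk1 : 1 ≤ k) (hkn : k ≤ n)
    (h : (Fin n → ℝ) → ℝ)
    (hh : h = fun χ => -Real.log (esymm n k (fun i => (χ i)⁻¹))) :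
    ∀ χ ∈ Gamma n, ∀ v : Fin n → ℝ,
      ∑ i : Fin n, ∑ j : Fin n,
        (pd n (pd n h i) j χ + (pd n h i χ / χ j) * (if i = j then 1 else 0))
          * v i * v j ≤ 0 := by
  subst hh
  intro χ hχ v
  have hχ' : ∀ i, 0 < χ i := hχ
  have hE : 0 < Stmt8Aux.Ef n k χ := Stmt8Aux.Ef_pos n k hkn χ hχ'
  set u : Fin n → ℝ := fun i => (χ i)⁻¹ * v i with hu
  set X : Fin n → ℝ := fun i => u i * Stmt8Aux.Af n k i χ with hX
  set Y : Fin n → Fin n → ℝ := fun i j => u i * u j * Stmt8Aux.Bf n k i j χ with hY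
  set c : ℝ := (Stmt8Aux.Ef n k χ)⁻¹ with hc
  have hterm : ∀ i j : Fin n,
      (pd n (pd n (fun χ : Fin n → ℝ =>
          -Real.log (esymm n k (fun i => (χ i)⁻¹))) i) j χ +
        (pd n (fun χ : Fin n → ℝ =>
          -Real.log (esymm n k (fun i => (χ i)⁻¹))) i χ / χ j) *
          (if i = j then 1 else 0)) * v i * v j
      = c * c * (X i * X j) - c * Y i j := by
    intro i j
    rw [Stmt8Aux.pd_pd n k hkn i j χ hχ, Stmt8Aux.pd_h n k hkn i χ hχ]
    by_cases hij : i = j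
    · subst hij
      have hχi := (hχ' i).ne'
      simp only [if_true, hX, hY, hu, hc]
      field_simp
      ring
    · simp only [hij, if_false, hX, hY, hu, hc]
      ring
  have h1 : ∑ i : Fin n, ∑ j : Fin n,
      (pd n (pd n (fun χ : Fin n → ℝ =>
          -Real.log (esymm n k (fun i => (χ i)⁻¹))) i) j χ +
        (pd n (fun χ : Fin n → ℝ =>
          -Real.log (esymm n k (fun i => (χ i)⁻¹))) i χ / χ j) *
          (if i = j then 1 else 0)) * v i * v j
      = ∑ i : Fin n, ∑ j : Fin n, (c * c * (X i * X j) - c * Y i j) :=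
    Finset.sum_congr rfl fun i _ => Finset.sum_congr rfl fun j _ => hterm i j
  rw [h1]
  have h2 : ∑ i : Fin n, ∑ j : Fin n, (c * c * (X i * X j) - c * Y i j)
      = c * c * ((∑ i : Fin n, X i) * (∑ j : Fin n, X j))
        - c * ∑ i : Fin n, ∑ j : Fin n, Y i j := by
    rw [Finset.sum_mul_sum]
    simp only [Finset.sum_sub_distrib, Finset.mul_sum]
  rw [h2]
  have hkey : (∑ i : Fin n, X i) ^ 2
      ≤ Stmt8Aux.Ef n k χ * ∑ i : Fin n, ∑ j : Fin n, Y i j :=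
    Stmt8Aux.key n k hkn χ hχ' u
  have h3 : (c * c) * (∑ i : Fin n, X i) ^ 2
      ≤ (c * c) * (Stmt8Aux.Ef n k χ * ∑ i : Fin n, ∑ j : Fin n, Y i j) :=
    mul_le_mul_of_nonneg_left hkey (by positivity)
  have h4 : (c * c) * (Stmt8Aux.Ef n k χ * ∑ i : Fin n, ∑ j : Fin n, Y i j)
      = c * ∑ i : Fin n, ∑ j : Fin n, Y i j := by
    rw [hc]
    field_simp
  nlinarith [h3, h4, sq_nonneg (∑ i : Fin n, X i)]
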